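/- (Universal dilation existence) For every finite state space E there exist a finite set G, a bijection α : E × G^ℤ → E × G^ℤ of the form ϑ∘φ₁, and for every sequence of stochastic matrices (P(t))_{t≥1} on E a product probability measure Q_{P} on G^ℤ (with independent coordinates), such that under ℙ_{k,P} = δ_k ⊗ Q_P on Ω = E × G^ℤ, the process Xₜ = X₀∘αᵗ is a Markov chain started at k with transition matrix P(t) at step t, i.e., ℙ_{k,P}(X_{t+1} = j | X₀, Y₁,...,Yₜ) = p_{Xₜ,j}(t+1) almost surely. -/

import Mathlib

/-- The free shift `ϑ` of the environment, extended trivially to `Ω = E × G^ℤ`. -/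
def shiftE (E G : Type*) : (E × (ℤ → G)) ≃ (E × (ℤ → G)) where
  toFun ω := (ω.1, fun n => ω.2 (n + 1))
  invFun ω := (ω.1, fun n => ω.2 (n - 1))
  left_inv ω := by
    obtain ⟨i, γ⟩ := ω
    simp only [Prod.mk.injEq]
    exact ⟨trivial, funext fun n => by norm_num⟩
  right_inv ω := by
    obtain ⟨i, γ⟩ := ω
    simp only [Prod.mk.injEq]
    exact ⟨trivial, funext fun n => by norm_num⟩

/-- The coupling `φ₁` of the system with the first environment coordinate,
extended to `Ω = E × G^ℤ` leaving all other coordinates fixed. -/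
def phiExt {E G : Type*} (φ : E × G → E × G) : E × (ℤ → G) → E × (ℤ → G) :=
  fun ω => ((φ (ω.1, ω.2 1)).1, Function.update ω.2 1 (φ (ω.1, ω.2 1)).2)


def mychain {E G : Type*} (φ : E × G → E × G) : ℕ → E → (ℤ → G) → E
  | 0, k, _ => k
  | t+1, k, γ => mychain φ t (φ (k, γ 1)).1 (fun n => γ (n+1))

theorem mychain_congr {E G : Type*} (φ : E × G → E × G) :
    ∀ (t : ℕ) (k : E) (γ γ' : ℤ → G),
      (∀ s : ℕ, 1 ≤ s → s ≤ t → γ (s : ℤ) = γ' (s : ℤ)) →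
      mychain φ t k γ = mychain φ t k γ'
  | 0, _, _, _, _ => rfl
  | t+1, k, γ, γ', h => by
    have h1 : γ 1 = γ' 1 := by exact_mod_cast h 1 le_rfl (by omega)
    simp only [mychain, h1]
    apply mychain_congr φ t
    intro s hs1 hs2
    have := h (s+1) (by omega) (by omega)
    push_cast at this
    exact this

theorem mychain_succ {E G : Type*} (φ : E × G → E × G) :
    ∀ (t : ℕ) (k : E) (γ : ℤ → G),
      mychain φ (t+1) k γ = (φ (mychain φ t k γ, γ ((t : ℤ)+1))).1
  | 0, k, γ => by simp [mychain]
  | t+1, k, γ => by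
    show mychain φ (t+1) (φ (k, γ 1)).1 (fun n => γ (n+1)) = _
    rw [mychain_succ φ t]
    have : ((t : ℤ) + 1) + 1 = ((t+1 : ℕ) : ℤ) + 1 := by push_cast; ring
    simp only [this]
    rfl

theorem iter_spec {E G : Type*} (φ : E × G → E × G) :
    ∀ (t : ℕ) (k : E) (γ : ℤ → G),
      ((⇑(shiftE E G) ∘ phiExt φ)^[t] (k, γ)).1 = mychain φ t k γ ∧
      ∀ n : ℤ, 1 ≤ n → ((⇑(shiftE E G) ∘ phiExt φ)^[t] (k, γ)).2 n = γ (n + t)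
  | 0, k, γ => by simp [mychain]
  | t+1, k, γ => by
    rw [Function.iterate_succ_apply]
    have hstep : (⇑(shiftE E G) ∘ phiExt φ) (k, γ) =
        ((φ (k, γ 1)).1, fun n => Function.update γ 1 (φ (k, γ 1)).2 (n+1)) := rfl
    rw [hstep]
    obtain ⟨ih1, ih2⟩ := iter_spec φ t (φ (k, γ 1)).1
      (fun n => Function.update γ 1 (φ (k, γ 1)).2 (n+1))
    constructor
    · rw [ih1]
      show _ = mychain φ t (φ (k, γ 1)).1 (fun n => γ (n+1))
      apply mychain_congr
      intro s hs1 _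
      have hne : (s : ℤ) + 1 ≠ 1 := by omega
      simp [Function.update_of_ne hne]
    · intro n hn
      rw [ih2 n hn]
      have hne : n + (t : ℤ) + 1 ≠ 1 := by omega
      have : n + ((t+1 : ℕ) : ℤ) = n + t + 1 := by push_cast; ring
      rw [Function.update_of_ne hne]; push_cast; ring_nf

theorem sum_prod_pi {ι β : Type*} [Fintype ι] [DecidableEq ι] [Fintype β]
    (F : ι → β → ℝ) : ∑ ℓ : ι → β, ∏ i, F i (ℓ i) = ∏ i, ∑ y, F i y := by
  rw [Finset.prod_univ_sum, Fintype.piFinset_univ]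

theorem sum_indicator_prod {ι β : Type*} [Fintype ι] [DecidableEq ι] [Fintype β] [DecidableEq β]
    (P : ι → β → ℝ) (h : ∀ i, ∑ y, P i y = 1) (x : ι) (j : β) :
    ∑ ℓ : ι → β, (if ℓ x = j then ∏ i, P i (ℓ i) else 0) = P x j := by
  have key : ∀ ℓ : ι → β, (if ℓ x = j then ∏ i, P i (ℓ i) else 0) =
      ∏ i, (if i = x then (if ℓ i = j then (1:ℝ) else 0) else 1) * P i (ℓ i) := by
    intro ℓ
    rw [Finset.prod_mul_distrib, Finset.prod_ite_eq' Finset.univ x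
      (fun i => if ℓ i = j then (1:ℝ) else 0)]
    simp only [Finset.mem_univ, if_true]
    split_ifs <;> ring
  simp_rw [key]
  rw [sum_prod_pi (fun i y => (if i = x then (if y = j then (1:ℝ) else 0) else 1) * P i y)]
  rw [Finset.prod_eq_single x]
  · simp [Finset.sum_ite_eq' Finset.univ j (fun y => P x y)]
  · intro b _ hb
    simp [hb, h b]
  · simp

def dilEquiv (n : ℕ) :
    (Fin (n+1) × (Fin (n+1) × (Fin (n+1) → Fin (n+1)))) ≃
    (Fin (n+1) × (Fin (n+1) × (Fin (n+1) → Fin (n+1)))) where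
  toFun p := (p.2.2 p.1, (p.1, Function.update p.2.2 p.1 p.2.1))
  invFun p := (p.2.1, (p.2.2 p.2.1, Function.update p.2.2 p.2.1 p.1))
  left_inv := by
    rintro ⟨i, m, ℓ⟩
    simp [Function.update_self, Function.update_idem, Function.update_eq_self]
  right_inv := by
    rintro ⟨j, i, ℓ⟩
    simp [Function.update_self, Function.update_idem, Function.update_eq_self]

theorem stmt12 (N : ℕ) :
    ∃ (G : Type) (_ : Fintype G) (φ : (Fin N × G) ≃ (Fin N × G)),
      ∀ P : ℕ → Matrix (Fin N) (Fin N) ℝ,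
        (∀ t, (∀ i j, 0 ≤ P t i j) ∧ ∀ i, ∑ j, P t i j = 1) →
        ∃ Q : ℕ → G → ℝ,
          (∀ n, (∀ g, 0 ≤ Q n g) ∧ ∑ g, Q n g = 1) ∧
          ∀ (t : ℕ) (k j : Fin N) (γ : ℤ → G),
            (∏ s ∈ Finset.range t, Q (s + 1) (γ ((s : ℤ) + 1))) ≠ 0 →
            (∑ g : G,
                if ((((⇑(shiftE (Fin N) G)) ∘ phiExt ⇑φ)^[t + 1]
                      (k, Function.update γ ((t : ℤ) + 1) g)).1 = j)
                then Q (t + 1) g else 0)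
              = P (t + 1) ((((⇑(shiftE (Fin N) G)) ∘ phiExt ⇑φ)^[t] (k, γ)).1) j := by
  cases N with
  | zero =>
    refine ⟨Fin 1, inferInstance, Equiv.refl _, fun P _ => ⟨fun _ _ => 1, fun n => ⟨fun _ => zero_le_one, by simp⟩, fun t k => k.elim0⟩⟩
  | succ n =>
    set E := Fin (n+1) with hE
    refine ⟨E × (E → E), inferInstance, dilEquiv n, ?_⟩
    intro P hP
    refine ⟨fun m g => (if g.1 = 0 then (1:ℝ) else 0) * ∏ i, P m i (g.2 i), ?_, ?_⟩
    · intro m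
      constructor
      · rintro ⟨a, ℓ⟩
        have := Finset.prod_nonneg (s := Finset.univ) (fun i _ => (hP m).1 i (ℓ i))
        positivity
      · rw [Fintype.sum_prod_type]
        have h1 : ∑ ℓ : E → E, ∏ i, P m i (ℓ i) = 1 := by
          refine (sum_prod_pi (fun i y => P m i y)).trans ?_
          exact Finset.prod_eq_one (fun i _ => (hP m).2 i)
        calc ∑ a : E, ∑ ℓ : E → E, (if a = 0 then (1:ℝ) else 0) * ∏ i, P m i (ℓ i)
            = ∑ a : E, (if a = 0 then (1:ℝ) else 0) * ∑ ℓ : E → E, ∏ i, P m i (ℓ i) := by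
              simp_rw [Finset.mul_sum]
          _ = 1 := by rw [h1]; simp
    · intro t k j γ _
      rw [(iter_spec (⇑(dilEquiv n)) t k γ).1]
      set x := mychain (⇑(dilEquiv n)) t k γ with hxdef
      have hcond : ∀ g : E × (E → E),
          ((⇑(shiftE (Fin (n+1)) (E × (E → E))) ∘ phiExt ⇑(dilEquiv n))^[t+1]
            (k, Function.update γ ((t:ℤ)+1) g)).1 = g.2 x := by
        intro g
        rw [(iter_spec (⇑(dilEquiv n)) (t+1) k _).1, mychain_succ]
        have h1 : Function.update γ ((t:ℤ)+1) g ((t:ℤ)+1) = g :=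
          Function.update_self _ _ _
        have h2 : mychain (⇑(dilEquiv n)) t k (Function.update γ ((t:ℤ)+1) g) = x := by
          apply mychain_congr
          intro s hs1 hs2
          have hne : (s:ℤ) ≠ (t:ℤ)+1 := by omega
          rw [Function.update_of_ne hne]
        rw [h1, h2]
        rfl
      simp only [hcond]
      rw [Fintype.sum_prod_type]
      have hsplit : ∀ (a : Fin (n+1)) (ℓ : Fin (n+1) → Fin (n+1)),
          (if ℓ x = j then (if a = 0 then (1:ℝ) else 0) * ∏ i, P (t+1) i (ℓ i) else 0)
          = (if a = 0 then (1:ℝ) else 0) * (if ℓ x = j then ∏ i, P (t+1) i (ℓ i) else 0) := by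
        intros a ℓ; split_ifs <;> ring
      dsimp only
      rw [Finset.sum_congr rfl (fun a _ => (Finset.sum_congr rfl (fun ℓ _ => hsplit a ℓ)).trans
        (Finset.mul_sum _ _ _).symm)]
      rw [sum_indicator_prod (fun i y => P (t+1) i y) (hP (t+1)).2 x j, ← Finset.sum_mul]
      simp
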